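/- The trace of the symmetrizer S_m on ⨂[ℂ]^m V equals the binomial coefficient (N + m − 1) choose m, i.e. LinearMap.trace ℂ (⨂[ℂ]^m V) S_m = (Nat.choose (N + m - 1) m : ℂ). -/

import Mathlib

open scoped TensorProduct

/-- The permutation operator `P_σ` on the `m`-fold tensor power of `V = Fin N → ℂ`,
sending `v₁ ⊗ ⋯ ⊗ v_m` to `v_{σ⁻¹(1)} ⊗ ⋯ ⊗ v_{σ⁻¹(m)}`. -/
noncomputable def permOp (N m : ℕ) (σ : Equiv.Perm (Fin m)) :
    (⨂[ℂ] _ : Fin m, (Fin N → ℂ)) →ₗ[ℂ] ⨂[ℂ] _ : Fin m, (Fin N → ℂ) :=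
  (PiTensorProduct.reindex ℂ (fun _ : Fin m => (Fin N → ℂ)) σ).toLinearMap

/-- The symmetrizer `S_m = (m!)⁻¹ ∑_σ P_σ` on `V^{⊗ m}`. -/
noncomputable def symmetrizer (N m : ℕ) :
    (⨂[ℂ] _ : Fin m, (Fin N → ℂ)) →ₗ[ℂ] ⨂[ℂ] _ : Fin m, (Fin N → ℂ) :=
  (Nat.factorial m : ℂ)⁻¹ • ∑ σ : Equiv.Perm (Fin m), permOp N m σ

/-! ### Auxiliary material: a basis of the tensor power -/

open PiTensorProduct

/-- The multilinear "evaluation" map sending `(v₁, …, v_m)` to `f ↦ ∏ i, vᵢ (f i)`. -/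
noncomputable def evalML (N m : ℕ) :
    MultilinearMap ℂ (fun _ : Fin m => (Fin N → ℂ)) ((Fin m → Fin N) → ℂ) :=
  MultilinearMap.pi fun f : Fin m → Fin N =>
    (MultilinearMap.mkPiAlgebra ℂ (Fin m) ℂ).compLinearMap fun i => LinearMap.proj (f i)

lemma evalML_apply (N m : ℕ) (v : Π _ : Fin m, (Fin N → ℂ)) (f : Fin m → Fin N) :
    evalML N m v f = ∏ i, v i (f i) := rfl

/-- Map from functions to the tensor power, sending `δ_f` to `⊗ᵢ e_{f i}`. -/
noncomputable def Psi (N m : ℕ) :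
    ((Fin m → Fin N) → ℂ) →ₗ[ℂ] ⨂[ℂ] _ : Fin m, (Fin N → ℂ) :=
  (Pi.basisFun ℂ (Fin m → Fin N)).constr ℂ
    (fun f => tprod ℂ (fun i => Pi.basisFun ℂ (Fin N) (f i)))

/-- Map from the tensor power to functions, induced by `evalML`. -/
noncomputable def Phi (N m : ℕ) :
    (⨂[ℂ] _ : Fin m, (Fin N → ℂ)) →ₗ[ℂ] ((Fin m → Fin N) → ℂ) :=
  PiTensorProduct.lift (evalML N m)

lemma psi_basis (N m : ℕ) (f : Fin m → Fin N) :
    Psi N m (Pi.basisFun ℂ (Fin m → Fin N) f)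
      = tprod ℂ (fun i => Pi.basisFun ℂ (Fin N) (f i)) := by
  rw [Psi, Module.Basis.constr_basis]

lemma phi_psi (N m : ℕ) : (Phi N m).comp (Psi N m) = LinearMap.id := by
  classical
  apply (Pi.basisFun ℂ (Fin m → Fin N)).ext
  intro f
  rw [LinearMap.comp_apply, psi_basis, Phi, PiTensorProduct.lift.tprod, LinearMap.id_apply]
  funext g
  rw [evalML_apply, Pi.basisFun_apply, Pi.single_apply]
  simp only [Pi.basisFun_apply]
  by_cases h : g = f
  · subst h; simp [Pi.single_apply]
  · rw [if_neg h]
    obtain ⟨i, hi⟩ := Function.ne_iff.mp h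
    exact Finset.prod_eq_zero (Finset.mem_univ i) (by simp [Pi.single_apply, hi])

lemma psi_phi (N m : ℕ) : (Psi N m).comp (Phi N m) = LinearMap.id := by
  classical
  apply PiTensorProduct.ext
  apply MultilinearMap.ext
  intro v
  rw [LinearMap.compMultilinearMap_apply, LinearMap.comp_apply, Phi,
    PiTensorProduct.lift.tprod, LinearMap.compMultilinearMap_apply, LinearMap.id_apply]
  have hPsi : Psi N m (evalML N m v) =
      ∑ g : Fin m → Fin N, (∏ i, v i (g i)) • tprod ℂ (fun i => Pi.basisFun ℂ (Fin N) (g i)) := by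
    rw [Psi, Module.Basis.constr_apply_fintype]
    simp [evalML_apply]
  rw [hPsi]
  have hv : v = fun i => ∑ k, v i k • Pi.basisFun ℂ (Fin N) k := by
    funext i
    rw [eq_comm]
    have := (Pi.basisFun ℂ (Fin N)).sum_repr (v i)
    simpa using this
  conv_rhs => rw [hv]
  rw [MultilinearMap.map_sum]
  refine Finset.sum_congr rfl fun g _ => ?_
  rw [MultilinearMap.map_smul_univ]

/-- The standard basis of the tensor power, indexed by `Fin m → Fin N`. -/
noncomputable def tensorBasis (N m : ℕ) :
    Module.Basis (Fin m → Fin N) ℂ (⨂[ℂ] _ : Fin m, (Fin N → ℂ)) :=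
  (Pi.basisFun ℂ (Fin m → Fin N)).map
    (LinearEquiv.ofLinear (Psi N m) (Phi N m) (psi_phi N m) (phi_psi N m))

lemma tensorBasis_apply (N m : ℕ) (f : Fin m → Fin N) :
    tensorBasis N m f = tprod ℂ (fun i => Pi.basisFun ℂ (Fin N) (f i)) := by
  rw [tensorBasis, Module.Basis.map_apply, LinearEquiv.ofLinear_apply, psi_basis]

lemma permOp_basis (N m : ℕ) (σ : Equiv.Perm (Fin m)) (f : Fin m → Fin N) :
    permOp N m σ (tensorBasis N m f) = tensorBasis N m (f ∘ ⇑σ.symm) := by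
  rw [tensorBasis_apply, tensorBasis_apply, permOp, LinearEquiv.coe_toLinearMap,
    PiTensorProduct.reindex_tprod]
  rfl

/-- The trace of `P_σ` is the number of functions fixed by `σ`. -/
lemma trace_permOp (N m : ℕ) (σ : Equiv.Perm (Fin m)) :
    LinearMap.trace ℂ (⨂[ℂ] _ : Fin m, (Fin N → ℂ)) (permOp N m σ)
      = ((Finset.univ.filter fun f : Fin m → Fin N => f ∘ ⇑σ.symm = f).card : ℂ) := by
  classical
  rw [LinearMap.trace_eq_matrix_trace ℂ (tensorBasis N m), Matrix.trace]
  have hdiag : ∀ f : Fin m → Fin N,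
      (LinearMap.toMatrix (tensorBasis N m) (tensorBasis N m) (permOp N m σ)).diag f
        = if f ∘ ⇑σ.symm = f then (1 : ℂ) else 0 := by
    intro f
    rw [Matrix.diag, LinearMap.toMatrix_apply, permOp_basis, Module.Basis.repr_self,
      Finsupp.single_apply]
  simp_rw [hdiag]
  rw [Finset.sum_boole]

/-! ### Counting the orbits: Burnside and multisets -/

open MulAction

attribute [local instance] arrowAction

/-- The multiset of values of a tuple, as an element of `Sym`. -/
noncomputable def toSym (N m : ℕ) (f : Fin m → Fin N) : Sym (Fin N) m :=
  ⟨(List.ofFn f : Multiset (Fin N)), by simp⟩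

lemma smul_eq_comp (N m : ℕ) (σ : Equiv.Perm (Fin m)) (f : Fin m → Fin N) :
    σ • f = f ∘ ⇑σ.symm := rfl

lemma toSym_resp (N m : ℕ) : ∀ (f g : Fin m → Fin N),
    Setoid.r (self := orbitRel (Equiv.Perm (Fin m)) (Fin m → Fin N)) f g →
    toSym N m f = toSym N m g := by
  intro f g h
  rw [orbitRel_apply] at h
  obtain ⟨σ, rfl⟩ := mem_orbit_iff.mp h
  apply Subtype.ext
  apply Multiset.coe_eq_coe.mpr
  rw [smul_eq_comp]
  exact Equiv.Perm.ofFn_comp_perm σ.symm g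

/-- Orbits of the permutation action on tuples correspond to multisets. -/
noncomputable def orbEquivSym (N m : ℕ) :
    Quotient (orbitRel (Equiv.Perm (Fin m)) (Fin m → Fin N)) ≃ Sym (Fin N) m := by
  refine Equiv.ofBijective (Quotient.lift (toSym N m) (toSym_resp N m)) ⟨?_, ?_⟩
  · refine Quotient.ind₂ fun f g h => Quotient.sound ?_
    simp only [Quotient.lift_mk] at h
    have hp : (List.ofFn f : List (Fin N)).Perm (List.ofFn g) :=
      Multiset.coe_eq_coe.mp (congrArg Subtype.val h)
    have h1 : f ∘ ⇑(Tuple.sort f) = g ∘ ⇑(Tuple.sort g) := by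
      apply List.ofFn_injective
      refine (fun hp hs1 hs2 => List.Perm.eq_of_sortedLE hs1 hs2 hp) ?_ ?_ ?_
      · exact ((Tuple.sort f).ofFn_comp_perm f).trans
          (hp.trans ((Tuple.sort g).ofFn_comp_perm g).symm)
      · exact (Tuple.monotone_sort f).sortedLE_ofFn
      · exact (Tuple.monotone_sort g).sortedLE_ofFn
    refine mem_orbit_iff.mpr ⟨Tuple.sort f * (Tuple.sort g)⁻¹, ?_⟩
    rw [smul_eq_comp]
    funext a
    rw [Function.comp_apply, ← Equiv.Perm.inv_def, mul_inv_rev, inv_inv]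
    have := congrFun h1 ((Tuple.sort f)⁻¹ a)
    simpa [Function.comp, Equiv.Perm.mul_apply] using this.symm
  · intro s
    have hlen : s.1.toList.length = m := by rw [Multiset.length_toList, s.2]
    refine ⟨Quotient.mk _ (fun i : Fin m => s.1.toList.get (Fin.cast hlen.symm i)), ?_⟩
    rw [Quotient.lift_mk]
    apply Subtype.ext
    show ((List.ofFn _ : List (Fin N)) : Multiset (Fin N)) = s.1
    have : List.ofFn (fun i : Fin m => s.1.toList.get (Fin.cast hlen.symm i)) = s.1.toList := by
      apply List.ext_get (by simp [hlen])
      intro n h1 h2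
      simp [List.get_ofFn]
      rfl
    rw [this, Multiset.coe_toList]

/-- The trace of the symmetrizer on `V^{⊗ m}` is the binomial coefficient
`(N + m - 1).choose m`. -/
theorem trace_symmetrizer (N : ℕ) (hN : 0 < N) (m : ℕ) :
    LinearMap.trace ℂ (⨂[ℂ] _ : Fin m, (Fin N → ℂ)) (symmetrizer N m)
      = (Nat.choose (N + m - 1) m : ℂ) := by
  classical
  rw [symmetrizer, map_smul, map_sum]
  simp_rw [trace_permOp]
  have hfix : ∀ σ : Equiv.Perm (Fin m),
      (Finset.univ.filter fun f : Fin m → Fin N => f ∘ ⇑σ.symm = f).card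
        = Fintype.card (fixedBy (Fin m → Fin N) σ) := by
    intro σ
    rw [eq_comm]
    have : ∀ f : Fin m → Fin N, f ∈ fixedBy (Fin m → Fin N) σ ↔ f ∘ ⇑σ.symm = f := by
      intro f
      rw [mem_fixedBy, smul_eq_comp]
    rw [Fintype.card_congr (Equiv.subtypeEquivRight this)]
    exact Fintype.card_subtype _
  simp_rw [hfix]
  rw [← Nat.cast_sum]
  rw [MulAction.sum_card_fixedBy_eq_card_orbits_mul_card_group (Equiv.Perm (Fin m))
    (Fin m → Fin N)]
  have hΩ : Fintype.card (Quotient (orbitRel (Equiv.Perm (Fin m)) (Fin m → Fin N)))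
      = (N + m - 1).choose m := by
    rw [Fintype.card_congr (orbEquivSym N m), Sym.card_sym_eq_multichoose,
      Fintype.card_fin, Nat.multichoose_eq]
  rw [hΩ, Fintype.card_perm, Fintype.card_fin]
  have hm : (m.factorial : ℂ) ≠ 0 := Nat.cast_ne_zero.mpr m.factorial_ne_zero
  push_cast
  rw [smul_eq_mul]
  field_simp
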